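/- Every maximal outerplanar graph O with vertices 1,…,n in clockwise order and positive weights w, and every index i with 1 ≤ i ≤ n, admits a proportional rectangle-contact representation in which the rectangle for vertex 1 is leftmost, the rectangle for vertex n is bottommost among the others, the top-right corners of the rectangles for vertices 1,…,i are exposed, and the bottom-right corners of the rectangles for vertices i,…,n are exposed. -/

import Mathlib

/-- Maximal outerplanar graph on `Fin n` with outer (Hamiltonian) cycle `0,1,...,n-1`:
it contains all cycle edges, its chords are pairwise non-crossing, and it has the
maximal number `2n-3` of edges. -/
def MaxOuterplanar (n : ℕ) (G : SimpleGraph (Fin n)) : Prop :=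
  (∀ i : Fin n, ∀ _ : 1 < n, G.Adj i ⟨((i : ℕ) + 1) % n, Nat.mod_lt _ (by omega)⟩) ∧
  (∀ a b c d : Fin n, G.Adj a b → G.Adj c d → ¬(a < c ∧ c < b ∧ b < d)) ∧
  G.edgeSet.ncard = 2 * n - 3


/-- An axis-aligned rectangle in the plane. -/
structure Rect where
  xlo : ℝ
  xhi : ℝ
  ylo : ℝ
  yhi : ℝ
  hx : xlo < xhi
  hy : ylo < yhi

def Rect.toSet (R : Rect) : Set (ℝ × ℝ) :=
  {p | R.xlo ≤ p.1 ∧ p.1 ≤ R.xhi ∧ R.ylo ≤ p.2 ∧ p.2 ≤ R.yhi}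

def Rect.interior (R : Rect) : Set (ℝ × ℝ) :=
  {p | R.xlo < p.1 ∧ p.1 < R.xhi ∧ R.ylo < p.2 ∧ p.2 < R.yhi}

def Rect.area (R : Rect) : ℝ := (R.xhi - R.xlo) * (R.yhi - R.ylo)

def Rect.IsSquare (R : Rect) : Prop := R.xhi - R.xlo = R.yhi - R.ylo

/-- Two rectangles share a boundary segment of positive length. -/
def Rect.Contact (R S : Rect) : Prop :=
  ((R.xhi = S.xlo ∨ S.xhi = R.xlo) ∧ max R.ylo S.ylo < min R.yhi S.yhi) ∨
  ((R.yhi = S.ylo ∨ S.yhi = R.ylo) ∧ max R.xlo S.xlo < min R.xhi S.xhi)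


-- ======================================================================
-- Auxiliary development
-- ======================================================================

namespace DSL


lemma contact_comm {R S : Rect} : Rect.Contact R S ↔ Rect.Contact S R := by
  unfold Rect.Contact
  rw [max_comm S.ylo, min_comm S.yhi, max_comm S.xlo, min_comm S.xhi]
  tauto

lemma contact_vert {R S : Rect} (h : R.xhi = S.xlo)
    (h1 : max R.ylo S.ylo < min R.yhi S.yhi) : Rect.Contact R S :=
  Or.inl ⟨Or.inl h, h1⟩

lemma contact_horiz {R S : Rect} (h : R.yhi = S.ylo)
    (h1 : max R.xlo S.xlo < min R.xhi S.xhi) : Rect.Contact R S :=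
  Or.inr ⟨Or.inl h, h1⟩

lemma disj_int_x {R S : Rect} (h : R.xhi ≤ S.xlo) :
    Disjoint R.interior S.interior := by
  rw [Set.disjoint_left]
  rintro p ⟨h1, h2, h3, h4⟩ ⟨g1, g2, g3, g4⟩
  exact absurd (lt_of_lt_of_le h2 (h.trans g1.le)) (lt_irrefl _)

lemma disj_int_y {R S : Rect} (h : R.yhi ≤ S.ylo) :
    Disjoint R.interior S.interior := by
  rw [Set.disjoint_left]
  rintro p ⟨h1, h2, h3, h4⟩ ⟨g1, g2, g3, g4⟩
  exact absurd (lt_of_lt_of_le h4 (h.trans g3.le)) (lt_irrefl _)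

/-- Rotate a rectangle by −90 degrees: the point map is (x,y) ↦ (y, −x). -/
def rot (R : Rect) : Rect :=
  ⟨R.ylo, R.yhi, -R.xhi, -R.xlo, R.hy, by have := R.hx; linarith⟩

@[simp] lemma rot_xlo (R : Rect) : (rot R).xlo = R.ylo := rfl
@[simp] lemma rot_xhi (R : Rect) : (rot R).xhi = R.yhi := rfl
@[simp] lemma rot_ylo (R : Rect) : (rot R).ylo = -R.xhi := rfl
@[simp] lemma rot_yhi (R : Rect) : (rot R).yhi = -R.xlo := rfl

lemma rot_area (R : Rect) : (rot R).area = R.area := by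
  unfold Rect.area rot; ring

lemma mem_rot {R : Rect} {p : ℝ × ℝ} :
    p ∈ (rot R).toSet ↔ (-p.2, p.1) ∈ R.toSet := by
  unfold Rect.toSet rot
  simp only [Set.mem_setOf_eq]
  constructor <;> rintro ⟨h1, h2, h3, h4⟩ <;> exact ⟨by linarith, by linarith, by linarith, by linarith⟩

lemma mem_int_rot {R : Rect} {p : ℝ × ℝ} :
    p ∈ (rot R).interior ↔ (-p.2, p.1) ∈ R.interior := by
  unfold Rect.interior rot
  simp only [Set.mem_setOf_eq]
  constructor <;> rintro ⟨h1, h2, h3, h4⟩ <;> exact ⟨by linarith, by linarith, by linarith, by linarith⟩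

lemma disj_rot {R S : Rect} (h : Disjoint R.interior S.interior) :
    Disjoint (rot R).interior (rot S).interior := by
  rw [Set.disjoint_left] at h ⊢
  intro p hp hq
  exact h (mem_int_rot.mp hp) (mem_int_rot.mp hq)

lemma contact_rot {R S : Rect} : Rect.Contact (rot R) (rot S) ↔ Rect.Contact R S := by
  unfold Rect.Contact rot
  simp only [max_lt_iff, lt_min_iff]
  constructor
  · rintro (⟨h | h, ⟨a1, a2⟩, a3, a4⟩ | ⟨h | h, ⟨a1, a2⟩, a3, a4⟩)
    · exact Or.inr ⟨Or.inl h, ⟨by linarith, by linarith⟩, by linarith, by linarith⟩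
    · exact Or.inr ⟨Or.inr h, ⟨by linarith, by linarith⟩, by linarith, by linarith⟩
    · exact Or.inl ⟨Or.inr (by linarith), ⟨by linarith, by linarith⟩, by linarith, by linarith⟩
    · exact Or.inl ⟨Or.inl (by linarith), ⟨by linarith, by linarith⟩, by linarith, by linarith⟩
  · rintro (⟨h | h, ⟨a1, a2⟩, a3, a4⟩ | ⟨h | h, ⟨a1, a2⟩, a3, a4⟩)
    · exact Or.inr ⟨Or.inr (by linarith), ⟨by linarith, by linarith⟩, by linarith, by linarith⟩
    · exact Or.inr ⟨Or.inl (by linarith), ⟨by linarith, by linarith⟩, by linarith, by linarith⟩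
    · exact Or.inl ⟨Or.inl h, ⟨by linarith, by linarith⟩, by linarith, by linarith⟩
    · exact Or.inl ⟨Or.inr h, ⟨by linarith, by linarith⟩, by linarith, by linarith⟩


def NC (T : Finset (ℕ × ℕ)) : Prop :=
  ∀ p ∈ T, ∀ q ∈ T, ¬(p.1 < q.1 ∧ q.1 < p.2 ∧ p.2 < q.2)

theorem chord_bound : ∀ m : ℕ, 1 ≤ m → ∀ T : Finset (ℕ × ℕ),
    (∀ p ∈ T, p.1 + 2 ≤ p.2 ∧ p.2 ≤ m) → NC T → T.card + 1 ≤ m := by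
  intro m
  induction m using Nat.strong_induction_on with
  | _ m ih =>
    intro hm T hbounds hNC
    rcases T.eq_empty_or_nonempty with rfl | hne
    · simpa using hm
    · obtain ⟨p₀, hp₀, hmax⟩ := T.exists_max_image (fun p => p.1) hne
      set a := p₀.1 with ha
      have hTb : (T.filter (fun p => p.1 = a)).Nonempty := ⟨p₀, Finset.mem_filter.2 ⟨hp₀, rfl⟩⟩
      obtain ⟨q₀, hq₀', hmin⟩ := (T.filter (fun p => p.1 = a)).exists_min_image (fun p => p.2) hTb
      have hq₀T : q₀ ∈ T := (Finset.mem_filter.1 hq₀').1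
      have hq₀a : q₀.1 = a := (Finset.mem_filter.1 hq₀').2
      set b := q₀.2 with hb
      have hab : a + 2 ≤ b := by
        have := (hbounds q₀ hq₀T).1; omega
      have hbm : b ≤ m := (hbounds q₀ hq₀T).2
      -- no second coordinate strictly inside (a,b)
      have key2 : ∀ p ∈ T, ¬(a < p.2 ∧ p.2 < b) := by
        rintro p hp ⟨h1, h2⟩
        rcases lt_or_eq_of_le (hmax p hp) with hlt | heq
        · exact hNC p hp q₀ hq₀T ⟨by omega, by omega, by omega⟩
        · have : p ∈ T.filter (fun p => p.1 = a) := Finset.mem_filter.2 ⟨hp, heq⟩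
          have := hmin p this
          omega
      have dom : ∀ p ∈ T, p.1 ≤ a ∧ (p.2 ≤ a ∨ b ≤ p.2) := by
        intro p hp
        refine ⟨hmax p hp, ?_⟩
        have := key2 p hp; omega
      set f : ℕ → ℕ := fun t => if b ≤ t then t - (b - a - 1) else t with hf
      have finj : ∀ s t, (s ≤ a ∨ b ≤ s) → (t ≤ a ∨ b ≤ t) → f s = f t → s = t := by
        intro s t hs ht
        simp only [hf]
        split_ifs <;> omega
      have fmono : ∀ s t, (s ≤ a ∨ b ≤ s) → (t ≤ a ∨ b ≤ t) → f s < f t → s < t := by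
        intro s t hs ht
        simp only [hf]
        split_ifs <;> omega
      set g : ℕ × ℕ → ℕ × ℕ := fun p => (f p.1, f p.2) with hg
      set T' : Finset (ℕ × ℕ) := (T.erase q₀).image g with hT'
      have hinj : Set.InjOn g (T.erase q₀) := by
        intro p hp p' hp' heq
        have hp1 := dom p (Finset.mem_of_mem_erase hp)
        have hp2 := dom p' (Finset.mem_of_mem_erase hp')
        have e1 : f p.1 = f p'.1 := congrArg Prod.fst heq
        have e2 : f p.2 = f p'.2 := congrArg Prod.snd heq
        have := finj p.1 p'.1 (Or.inl hp1.1) (Or.inl hp2.1) e1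
        have := finj p.2 p'.2 hp1.2 hp2.2 e2
        exact Prod.ext ‹p.1 = p'.1› ‹p.2 = p'.2›
      have hcard' : T'.card = T.card - 1 := by
        rw [hT', Finset.card_image_of_injOn hinj, Finset.card_erase_of_mem hq₀T]
      have hne' : q₀ = (a, b) := Prod.ext hq₀a rfl
      have hbounds' : ∀ p ∈ T', p.1 + 2 ≤ p.2 ∧ p.2 ≤ m - (b - a - 1) := by
        intro P hP
        obtain ⟨p, hp, rfl⟩ := Finset.mem_image.1 hP
        have hpT := Finset.mem_of_mem_erase hp
        have hdom := dom p hpT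
        have hb1 := (hbounds p hpT).1
        have hb2 := (hbounds p hpT).2
        have hne2 : p ≠ q₀ := Finset.ne_of_mem_erase hp
        have hne3 : ¬(p.1 = a ∧ p.2 = b) := by
          rintro ⟨e1, e2⟩
          exact hne2 (Prod.ext (by omega) (by omega))
        simp only [hg, hf]
        split_ifs <;> omega
      have hNC' : NC T' := by
        rintro P hP Q hQ ⟨c1, c2, c3⟩
        obtain ⟨p, hp, rfl⟩ := Finset.mem_image.1 hP
        obtain ⟨q, hq, rfl⟩ := Finset.mem_image.1 hQ
        have hdp := dom p (Finset.mem_of_mem_erase hp)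
        have hdq := dom q (Finset.mem_of_mem_erase hq)
        refine hNC p (Finset.mem_of_mem_erase hp) q (Finset.mem_of_mem_erase hq) ⟨?_, ?_, ?_⟩
        · exact fmono _ _ (Or.inl hdp.1) (Or.inl hdq.1) c1
        · exact fmono _ _ (Or.inl hdq.1) hdp.2 c2
        · exact fmono _ _ hdp.2 hdq.2 c3
      have hm' : m - (b - a - 1) < m := by omega
      have hm'1 : 1 ≤ m - (b - a - 1) := by omega
      have := ih (m - (b - a - 1)) hm' hm'1 T' hbounds' hNC'
      have hTcard : 1 ≤ T.card := Finset.card_pos.2 hne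
      omega


variable {n : ℕ} (G : SimpleGraph (Fin n))

/-- Adjacency transported to natural number indices. -/
def E (a b : ℕ) : Prop := ∃ (ha : a < n) (hb : b < n), G.Adj ⟨a, ha⟩ ⟨b, hb⟩

lemma Esymm {a b : ℕ} (h : E G a b) : E G b a := by
  obtain ⟨ha, hb, h⟩ := h; exact ⟨hb, ha, h.symm⟩

lemma Elt {a b : ℕ} (h : E G a b) : a < n ∧ b < n := by
  obtain ⟨ha, hb, _⟩ := h; exact ⟨ha, hb⟩

lemma Ene {a b : ℕ} (h : E G a b) : a ≠ b := by
  obtain ⟨ha, hb, h⟩ := h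
  intro hc; subst hc
  exact G.irrefl h

lemma EofAdj {u v : Fin n} (h : G.Adj u v) : E G u.val v.val :=
  ⟨u.isLt, v.isLt, h⟩

lemma AdjofE {u v : Fin n} (h : E G u.val v.val) : G.Adj u v := by
  obtain ⟨ha, hb, h⟩ := h; exact h

variable (hG : MaxOuterplanar n G) (hn : 3 ≤ n)
include hG hn

lemma Ecyc {k : ℕ} (h : k + 1 < n) : E G k (k + 1) := by
  have h2 := hG.1 ⟨k, by omega⟩ (by omega)
  have h3 : E G k ((k + 1) % n) := EofAdj G h2
  rwa [Nat.mod_eq_of_lt h] at h3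

lemma Elast : E G 0 (n - 1) := by
  have h2 := hG.1 ⟨n - 1, by omega⟩ (by omega)
  have h3 : E G (n - 1) ((n - 1 + 1) % n) := EofAdj G h2
  have h4 : (n - 1 + 1) % n = 0 := by
    rw [Nat.sub_add_cancel (by omega)]; exact Nat.mod_self n
  rw [h4] at h3
  exact Esymm G h3

lemma ncrossE {a b c d : ℕ} (hab : E G a b) (hcd : E G c d)
    (h1 : a < c) (h2 : c < b) (h3 : b < d) : False := by
  obtain ⟨ha, hb, hab⟩ := hab
  obtain ⟨hc, hd, hcd⟩ := hcd
  exact hG.2.1 _ _ _ _ hab hcd ⟨h1, h2, h3⟩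

theorem apex_ex {a b : ℕ} (hE : E G a b) (hab : a + 2 ≤ b) :
    ∃ c, a < c ∧ c < b ∧ E G a c ∧ E G c b := by
  classical
  by_contra hno
  push_neg at hno
  have hbn : b < n := (Elt G hE).2
  -- the finset of ordered edges
  set Sfin : Finset (ℕ × ℕ) :=
    (Finset.range n ×ˢ Finset.range n).filter (fun p => p.1 < p.2 ∧ E G p.1 p.2) with hSfin
  have memS : ∀ p : ℕ × ℕ, p ∈ Sfin ↔ (p.1 < p.2 ∧ E G p.1 p.2) := by
    intro p
    rw [hSfin, Finset.mem_filter, Finset.mem_product, Finset.mem_range, Finset.mem_range]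
    constructor
    · rintro ⟨_, h⟩; exact h
    · rintro ⟨h1, h2⟩; exact ⟨⟨(Elt G h2).1, (Elt G h2).2⟩, h1, h2⟩
  -- its cardinality equals the number of edges
  have hcards : Sfin.card = G.edgeFinset.card := by
    refine Finset.card_bij (t := G.edgeFinset) (fun (p : ℕ × ℕ) (hp : p ∈ Sfin) => s((⟨p.1, ((memS p).1 hp).2.choose⟩ : Fin n),
      (⟨p.2, ((memS p).1 hp).2.choose_spec.choose⟩ : Fin n))) ?_ ?_ ?_
    · intro p hp
      rw [SimpleGraph.mem_edgeFinset, SimpleGraph.mem_edgeSet]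
      exact ((memS p).1 hp).2.choose_spec.choose_spec
    · intro p hp q hq heq
      rw [Sym2.eq_iff] at heq
      have h1 := ((memS p).1 hp).1
      have h2 := ((memS q).1 hq).1
      rcases heq with ⟨e1, e2⟩ | ⟨e1, e2⟩
      · have : p.1 = q.1 := congrArg Fin.val e1
        have : p.2 = q.2 := congrArg Fin.val e2
        exact Prod.ext ‹p.1 = q.1› ‹p.2 = q.2›
      · have e1' : p.1 = q.2 := congrArg Fin.val e1
        have e2' : p.2 = q.1 := congrArg Fin.val e2
        omega
    · intro e he
      rw [SimpleGraph.mem_edgeFinset] at he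
      induction e with
      | _ u v =>
        rw [SimpleGraph.mem_edgeSet] at he
        rcases lt_trichotomy u.val v.val with hlt | heq | hgt
        · refine ⟨(u.val, v.val), (memS _).2 ⟨hlt, EofAdj G he⟩, ?_⟩
          rfl
        · exact absurd (Fin.ext heq) (G.ne_of_adj he)
        · refine ⟨(v.val, u.val), (memS _).2 ⟨hgt, EofAdj G he.symm⟩, ?_⟩
          rw [Sym2.eq_swap]
  have hedges : G.edgeFinset.card = 2 * n - 3 := by
    have h := hG.2.2
    rwa [Set.ncard_eq_toFinset_card' G.edgeSet] at h
  -- split into unit edges and chords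
  set SU : Finset (ℕ × ℕ) := Sfin.filter (fun p => p.2 = p.1 + 1) with hSU
  set SC : Finset (ℕ × ℕ) := Sfin.filter (fun p => ¬(p.2 = p.1 + 1)) with hSC
  have hsplit : SU.card + SC.card = Sfin.card := Finset.card_filter_add_card_filter_not _
  have hSUcard : SU.card = n - 1 := by
    have : SU = (Finset.range (n - 1)).image (fun k => (k, k + 1)) := by
      ext p
      rw [hSU, Finset.mem_filter, memS, Finset.mem_image]
      constructor
      · rintro ⟨⟨h1, h2⟩, h3⟩
        exact ⟨p.1, Finset.mem_range.2 (by have := (Elt G h2).2; omega),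
          Prod.ext rfl h3.symm⟩
      · rintro ⟨k, hk, rfl⟩
        rw [Finset.mem_range] at hk
        exact ⟨⟨by omega, Ecyc G hG hn (by omega)⟩, rfl⟩
    rw [this, Finset.card_image_of_injective _ (fun x y h => by
      simpa using congrArg Prod.fst h), Finset.card_range]
  have hSCcard : SC.card = n - 2 := by
    have h1 : Sfin.card = 2 * n - 3 := hcards.trans hedges
    omega
  -- the new chord
  have hA : ((Finset.Ioo a b).filter (fun c => E G a c)).Nonempty := by
    refine ⟨a + 1, Finset.mem_filter.2 ⟨Finset.mem_Ioo.2 ⟨by omega, by omega⟩, ?_⟩⟩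
    exact Ecyc G hG hn (by omega)
  set c := ((Finset.Ioo a b).filter (fun c => E G a c)).max' hA with hc
  have hcmem := ((Finset.Ioo a b).filter (fun c => E G a c)).max'_mem hA
  rw [Finset.mem_filter, Finset.mem_Ioo] at hcmem
  obtain ⟨⟨hac, hcb⟩, hEac⟩ := hcmem
  have hcmax : ∀ x ∈ (Finset.Ioo a b).filter (fun c => E G a c), x ≤ c :=
    fun x hx => Finset.le_max' _ x hx
  have hnEcb : ¬ E G c b := fun h => hno c hac hcb hEac h
  have hcb2 : c + 2 ≤ b := by
    rcases Nat.lt_or_ge (c + 1) b with h | h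
    · omega
    · exfalso
      apply hnEcb
      have h5 := Ecyc G hG hn (show c + 1 < n by omega)
      rwa [show c + 1 = b by omega] at h5
  -- insert the chord (c, b) into SC and contradict the bound
  have hSCsub : ∀ p ∈ SC, p.1 + 2 ≤ p.2 ∧ p.2 ≤ n - 1 := by
    intro p hp
    rw [hSC, Finset.mem_filter, memS] at hp
    obtain ⟨⟨h1, h2⟩, h3⟩ := hp
    have := (Elt G h2).2
    omega
  have hnotin : (c, b) ∉ SC := by
    rw [hSC, Finset.mem_filter, memS]
    rintro ⟨⟨_, hE'⟩, _⟩
    exact hnEcb hE'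
  have hNC : NC (insert (c, b) SC) := by
    have hmemE : ∀ p ∈ SC, E G p.1 p.2 := by
      intro p hp
      rw [hSC, Finset.mem_filter, memS] at hp
      exact hp.1.2
    rintro p hp q hq ⟨c1, c2, c3⟩
    rw [Finset.mem_insert] at hp hq
    rcases hp with rfl | hp <;> rcases hq with rfl | hq
    · omega
    · -- p = (c,b), q a chord : c < q.1 < b < q.2 crosses (a,b)
      exact ncrossE G hG hn hE (hmemE q hq) (by omega) (by simpa using c2) (by simpa using c3)
    · -- q = (c,b) : p.1 < c < p.2 < b
      simp only at c1 c2 c3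
      have hEp := hmemE p hp
      rcases lt_trichotomy p.1 a with h | h | h
      · exact ncrossE G hG hn hEp hE h (by omega) c3
      · -- p.1 = a : contradicts maximality of c
        have : p.2 ∈ (Finset.Ioo a b).filter (fun c => E G a c) := by
          rw [Finset.mem_filter, Finset.mem_Ioo]
          exact ⟨⟨by omega, c3⟩, by rw [← h]; exact hEp⟩
        have := hcmax _ this
        omega
      · exact ncrossE G hG hn hEac (hmemE p hp) h c1 c2
    · exact ncrossE G hG hn (hmemE p hp) (hmemE q hq) c1 c2 c3
  have hbound := chord_bound (n - 1) (by omega) (insert (c, b) SC)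
    (by
      intro p hp
      rw [Finset.mem_insert] at hp
      rcases hp with rfl | hp
      · exact ⟨hcb2, by omega⟩
      · exact hSCsub p hp)
    hNC
  rw [Finset.card_insert_of_notMem hnotin, hSCcard] at hbound
  omega


omit hG hn

variable (w' : ℕ → ℝ)

noncomputable def gfac (v : ℕ) : ℝ := w' v + 2 + (w' v)⁻¹

noncomputable def Kcap (a b : ℕ) : ℝ := ∏ v ∈ Finset.Ioo a b, gfac w' v

variable (hw' : ∀ v, 0 < w' v)
include hw'

lemma gfac_ge_one (v : ℕ) : 1 ≤ gfac w' v := by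
  have h1 := hw' v
  have h2 : 0 < (w' v)⁻¹ := inv_pos.2 h1
  unfold gfac; linarith

lemma Kcap_ge_one (a b : ℕ) : 1 ≤ Kcap w' a b := by
  unfold Kcap
  refine Finset.prod_induction _ (fun x => 1 ≤ x) (fun x y hx hy => by nlinarith) le_rfl
    (fun i _ => gfac_ge_one w' hw' i)

omit hw' in
lemma Kcap_split {a b c : ℕ} (hac : a < c) (hcb : c < b) :
    Kcap w' a b = Kcap w' a c * gfac w' c * Kcap w' c b := by
  have h1 : Finset.Ioo a b = (Finset.Ioo a c ∪ {c}) ∪ Finset.Ioo c b := by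
    ext x
    simp only [Finset.mem_Ioo, Finset.mem_union, Finset.mem_singleton]
    omega
  have d1 : Disjoint (Finset.Ioo a c ∪ {c}) (Finset.Ioo c b) := by
    rw [Finset.disjoint_left]
    intro x hx hy
    simp only [Finset.mem_Ioo, Finset.mem_union, Finset.mem_singleton] at hx hy
    omega
  have d2 : Disjoint (Finset.Ioo a c) ({c} : Finset ℕ) := by
    rw [Finset.disjoint_left]
    intro x hx hy
    simp only [Finset.mem_Ioo] at hx
    simp only [Finset.mem_singleton] at hy
    omega
  unfold Kcap
  rw [h1, Finset.prod_union d1, Finset.prod_union d2, Finset.prod_singleton]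

omit hw' in
lemma key_ineq {KL KR t : ℝ} (hKL : 1 ≤ KL) (hKR : 1 ≤ KR) (ht : 0 < t) :
    (KL + t) * (KR + t) ≤ t * (KL * (t + 2 + t⁻¹) * KR) := by
  have h1 : t * (KL * (t + 2 + t⁻¹) * KR) = KL * KR * (t ^ 2 + 2 * t + 1) := by
    field_simp
  rw [h1]
  have hKK : (1 : ℝ) ≤ KL * KR := by nlinarith
  nlinarith [mul_nonneg (mul_nonneg ht.le ht.le) (sub_nonneg.mpr hKK),
    mul_nonneg ht.le (sub_nonneg.mpr hKK),
    mul_nonneg ht.le (mul_nonneg (by linarith : (0:ℝ) ≤ KL) (sub_nonneg.mpr hKR)),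
    mul_nonneg ht.le (mul_nonneg (by linarith : (0:ℝ) ≤ KR) (sub_nonneg.mpr hKL))]


/- ===== the double-staircase invariant ===== -/

/-- Invariant for the recursive double-staircase construction of the rectangles of
the vertices strictly between `a` and `b`, with pivot `j`.  The corner of the free
region is `(x1, y1)`; the rectangle of `a` occupies the segment
`{x1} × [y1, y1+Ha]` on its right side; the rectangle of `b` exposes the segment
`[x1, x1+Wb] × {y1}` of its top side (its right edge is on `x = x1 + Wb`) plus
its right edge below `y1`; `D` is the depth budget below the line `y = y1`. -/
structure MSpec (j a b : ℕ) (x1 y1 Ha Wb D : ℝ) (ρ : ℕ → Rect) : Prop where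
  area : ∀ c, a < c → c < b → (ρ c).area = w' c
  zone : ∀ c, a < c → c < b →
    (x1 ≤ (ρ c).xlo ∧ y1 ≤ (ρ c).ylo) ∨
    (x1 + Wb ≤ (ρ c).xlo ∧ y1 - D < (ρ c).ylo ∧ (ρ c).yhi ≤ y1 ∧ j < c)
  la : ∀ c, a < c → c < b → ((ρ c).xlo = x1 ↔ E G a c)
  laSpan : ∀ c, a < c → c < b → E G a c → (ρ c).yhi < y1 + Ha ∧ y1 ≤ (ρ c).ylo
  bb : ∀ c, a < c → c < b →
    (E G c b ↔ ((ρ c).ylo = y1 ∨ ((ρ c).xlo = x1 + Wb ∧ (ρ c).yhi ≤ y1 ∧ j < c)))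
  bbQuad : ∀ c, a < c → c < b → (ρ c).ylo = y1 →
    (ρ c).xlo < x1 + Wb ∧ (c < j → (ρ c).xhi < x1 + Wb) ∧ (j ≤ c → x1 + Wb < (ρ c).xhi)
  tmode : b ≤ j → ∀ c, a < c → c < b → (ρ c).xhi < x1 + Wb
  disj : ∀ c d, a < c → c < b → a < d → d < b → c ≠ d →
    Disjoint (ρ c).interior (ρ d).interior
  contact : ∀ c d, a < c → c < b → a < d → d < b → c ≠ d →
    (Rect.Contact (ρ c) (ρ d) ↔ E G c d)
  trexp : ∀ c d, a < c → c < b → a < d → d < b → c ≠ d → c ≤ j →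
    ((ρ c).xhi, (ρ c).yhi) ∉ (ρ d).toSet
  brexp : ∀ c d, a < c → c < b → a < d → d < b → c ≠ d → j ≤ c →
    ((ρ c).xhi, (ρ c).ylo) ∉ (ρ d).toSet

include hG hn hw'

set_option maxHeartbeats 4000000 in
theorem Mlem : ∀ N : ℕ, ∀ j a b : ℕ, b - a ≤ N → a < b → b ≤ n - 1 → E G a b →
    ∀ x1 y1 Ha Wb D : ℝ, 0 < Ha → 0 < Wb → 0 < D → Kcap w' a b < Ha * Wb →
    ∃ ρ : ℕ → Rect, MSpec G w' j a b x1 y1 Ha Wb D ρ := by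
  intro N
  induction N using Nat.strong_induction_on with
  | _ N ih =>
  intro j a b hN hab hbn hE x1 y1 Ha Wb D hHa hWb hD hcap
  rcases Nat.lt_or_ge (a + 1) b with hrec | hbase
  swap
  · -- base case : no inner vertices
    refine ⟨fun _ => ⟨0, 1, 0, 1, zero_lt_one, zero_lt_one⟩, ?_, ?_, ?_, ?_, ?_, ?_, ?_, ?_, ?_, ?_, ?_⟩ <;>
      (intro c hc1 hc2; omega) <;> skip
  · -- recursive case
    obtain ⟨c, hac, hcb, hEac, hEcb⟩ := apex_ex G hG hn hE (by omega)
    have hcn : c ≤ n - 1 := by omega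
    set t := w' c with htdef
    have ht : 0 < t := hw' c
    set KL := Kcap w' a c with hKLdef
    set KR := Kcap w' c b with hKRdef
    have hKL : 1 ≤ KL := Kcap_ge_one w' hw' a c
    have hKR : 1 ≤ KR := Kcap_ge_one w' hw' c b
    have hksplit : Kcap w' a b = KL * gfac w' c * KR := Kcap_split w' hac hcb
    have key : (KL + t) * (KR + t) < t * (Ha * Wb) := by
      calc (KL + t) * (KR + t) ≤ t * (KL * gfac w' c * KR) := key_ineq hKL hKR ht
        _ < t * (Ha * Wb) := by
            apply mul_lt_mul_of_pos_left _ ht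
            rw [← hksplit]; exact hcap
    rcases Nat.lt_or_ge c j with hcj | hcj
    · -- CASE 1 : apex below the pivot
      have hKRt : (0:ℝ) < KR + t := by linarith
      have hlohi : (KL + t) / Ha < t * Wb / (KR + t) := by
        rw [div_lt_div_iff₀ hHa hKRt]
        nlinarith [key]
      set u := ((KL + t) / Ha + t * Wb / (KR + t)) / 2 with hudef
      have hu_lo : (KL + t) / Ha < u := by rw [hudef]; linarith
      have hu_hi : u < t * Wb / (KR + t) := by rw [hudef]; linarith
      have hu0 : 0 < u := by
        have h2 : 0 < (KL + t) / Ha := div_pos (by linarith) hHa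
        linarith
      set h := t / u with hhdef
      have hh0 : 0 < h := div_pos ht hu0
      have hhu : u * h = t := by rw [hhdef]; field_simp
      have hHau : KL + t < Ha * u := by
        have h2 := (div_lt_iff₀ hHa).mp hu_lo
        have h3 : u * Ha = Ha * u := mul_comm u Ha
        linarith
      have hhHa : h < Ha := by
        rw [hhdef, div_lt_iff₀ hu0]
        have h3 : Ha * u = u * Ha := mul_comm Ha u
        linarith
      have huWb : u < Wb := by
        have h2 : t * Wb / (KR + t) ≤ Wb := by
          rw [div_le_iff₀ hKRt]; nlinarith
        linarith
      have capL : KL < (Ha - h) * u := by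
        have h2 : (Ha - h) * u = Ha * u - t := by
          rw [← hhu]; ring
        rw [h2]; linarith
      have capR : KR < h * (Wb - u) := by
        have h2 : u * (KR + t) < t * Wb := by
          have h3 := mul_lt_mul_of_pos_right hu_hi hKRt
          rwa [div_mul_cancel₀ _ (ne_of_gt hKRt)] at h3
        have h4 : h * (Wb - u) = h * Wb - t := by rw [← hhu]; ring
        have h5 : u * (h * Wb) = t * Wb := by rw [← hhu]; ring
        rw [h4]
        have h6 : KR + t < h * Wb := by
          rw [← mul_lt_mul_iff_right₀ hu0, h5]
          exact h2
        linarith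
      set rc : Rect := ⟨x1, x1 + u, y1, y1 + h, by linarith, by linarith⟩ with hrc
      have rcxlo : rc.xlo = x1 := rfl
      have rcxhi : rc.xhi = x1 + u := rfl
      have rcylo : rc.ylo = y1 := rfl
      have rcyhi : rc.yhi = y1 + h := rfl
      obtain ⟨ρL, sL⟩ := ih (N - 1) (by omega) j a c (by omega) hac (by omega) hEac
        x1 (y1 + h) (Ha - h) u D (by linarith) hu0 hD capL
      obtain ⟨ρR, sR⟩ := ih (N - 1) (by omega) j c b (by omega) hcb hbn hEcb
        (x1 + u) y1 h (Wb - u) D hh0 (by linarith) hD capR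
      classical
      set ρ : ℕ → Rect := fun d => if d < c then ρL d else if d = c then rc else ρR d with hρ
      have eL : ∀ d, d < c → ρ d = ρL d := by
        intro d hdc
        show (if d < c then ρL d else if d = c then rc else ρR d) = ρL d
        rw [if_pos hdc]
      have eC : ρ c = rc := by
        show (if c < c then ρL c else if c = c then rc else ρR c) = rc
        rw [if_neg (lt_irrefl c), if_pos rfl]
      have eR : ∀ d, c < d → ρ d = ρR d := by
        intro d hdc
        show (if d < c then ρL d else if d = c then rc else ρR d) = ρR d
        rw [if_neg (by omega : ¬ d < c), if_neg (by omega : ¬ d = c)]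
      have eC' : ∀ d, d = c → ρ d = rc := by
        intro d hd; rw [hd]; exact eC
      -- L has no strip rectangles and satisfies T-mode bound
      have znL : ∀ e, a < e → e < c → x1 ≤ (ρL e).xlo ∧ y1 + h ≤ (ρL e).ylo := by
        intro e h1 h2
        rcases sL.zone e h1 h2 with hq | hs
        · exact hq
        · exfalso; omega
      have tmL : ∀ e, a < e → e < c → (ρL e).xhi < x1 + u :=
        fun e h1 h2 => sL.tmode (by omega) e h1 h2
      -- R rectangles are to the right of x1 + u
      have xR : ∀ e, c < e → e < b → x1 + u ≤ (ρR e).xlo ∧ y1 - D < (ρR e).ylo := by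
        intro e h1 h2
        rcases sR.zone e h1 h2 with hq | hs
        · exact ⟨hq.1, by linarith [(ρR e).hy, hq.2]⟩
        · exact ⟨by linarith [hs.1], hs.2.1⟩
      -- adjacency of L-vertices with c is exactly sitting on top of rc
      have hbbL : ∀ e, a < e → e < c → (E G e c ↔ (ρL e).ylo = y1 + h) := by
        intro e h1 h2
        rw [sL.bb e h1 h2]
        constructor
        · rintro (he | ⟨he1, he2, he3⟩)
          · exact he
          · exfalso; omega
        · exact fun he => Or.inl he
      have LC : ∀ e, a < e → e < c → (Rect.Contact (ρL e) rc ↔ E G e c) := by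
        intro e h1 h2
        rw [hbbL e h1 h2]
        have hz := znL e h1 h2
        have htm := tmL e h1 h2
        have hhx := (ρL e).hx
        have hhy := (ρL e).hy
        constructor
        · rintro (⟨he | he, hov⟩ | ⟨he | he, hov⟩)
          · exfalso; simp only [lt_min_iff, max_lt_iff] at hov; linarith [he, hov.1.2]
          · exfalso; linarith [he]
          · exfalso; linarith [he]
          · linarith [he]
        · intro he
          refine Or.inr ⟨Or.inr (by linarith), ?_⟩
          simp only [lt_min_iff, max_lt_iff]
          exact ⟨⟨by linarith, by linarith⟩, by linarith, by linarith⟩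
      -- adjacency of R-vertices with c is exactly touching the right side of rc
      have RC : ∀ e, c < e → e < b → (Rect.Contact rc (ρR e) ↔ E G c e) := by
        intro e h1 h2
        have hz := xR e h1 h2
        have hhx := (ρR e).hx
        have hhy := (ρR e).hy
        constructor
        · rintro (⟨he | he, hov⟩ | ⟨he | he, hov⟩)
          · exact (sR.la e h1 h2).1 (by linarith [he])
          · exfalso; linarith [he]
          · exfalso; simp only [lt_min_iff, max_lt_iff] at hov; linarith [hov.2.1]
          · exfalso; simp only [lt_min_iff, max_lt_iff] at hov; linarith [hov.2.1]
        · intro he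
          have hx2 := (sR.la e h1 h2).2 he
          have hsp := sR.laSpan e h1 h2 he
          refine Or.inl ⟨Or.inl (by linarith [hx2]), ?_⟩
          simp only [lt_min_iff, max_lt_iff]
          exact ⟨⟨by linarith [hsp.1], by linarith [hsp.2]⟩, by linarith [hsp.1], by linarith [hsp.2]⟩
      -- L and R never touch
      have LRnc : ∀ d e, a < d → d < c → c < e → e < b →
          ¬ Rect.Contact (ρL d) (ρR e) := by
        intro d e h1 h2 h3 h4
        have htm := tmL d h1 h2
        have hz := xR e h3 h4
        have hx1 := (ρL d).hx
        have hx2 := (ρR e).hx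
        rintro (⟨he | he, hov⟩ | ⟨he | he, hov⟩) <;>
          simp only [lt_min_iff, max_lt_iff] at hov
        · linarith [he]
        · linarith [he]
        · linarith [hov.1.2, hov.2.1]
        · linarith [hov.1.2, hov.2.1]
      have LRne : ∀ d e, a < d → d < c → c < e → e < b → ¬ E G d e := by
        intro d e h1 h2 h3 h4 hEde
        exact ncrossE G hG hn hEac hEde h1 h2 h3
      refine ⟨ρ, ?_, ?_, ?_, ?_, ?_, ?_, ?_, ?_, ?_, ?_, ?_⟩
      · -- area
        intro d h1 h2
        rcases lt_trichotomy d c with hdc | rfl | hdc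
        · rw [eL d hdc]; exact sL.area d h1 hdc
        · rw [eC]
          show (x1 + u - x1) * (y1 + h - y1) = w' d
          rw [show x1 + u - x1 = u by ring, show y1 + h - y1 = h by ring]
          exact hhu
        · rw [eR d hdc]; exact sR.area d hdc h2
      · -- zone
        intro d h1 h2
        rcases lt_trichotomy d c with hdc | rfl | hdc
        · rw [eL d hdc]
          exact Or.inl ⟨(znL d h1 hdc).1, by linarith [(znL d h1 hdc).2]⟩
        · rw [eC]; exact Or.inl ⟨le_of_eq rcxlo.symm, le_of_eq rcylo.symm⟩
        · rw [eR d hdc]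
          rcases sR.zone d hdc h2 with hq | hs
          · exact Or.inl ⟨by linarith [hq.1], hq.2⟩
          · exact Or.inr ⟨by linarith [hs.1], hs.2.1, hs.2.2.1, hs.2.2.2⟩
      · -- la
        intro d h1 h2
        rcases lt_trichotomy d c with hdc | rfl | hdc
        · rw [eL d hdc]; exact sL.la d h1 hdc
        · rw [eC]
          constructor
          · intro _; exact hEac
          · intro _; exact rcxlo
        · rw [eR d hdc]
          constructor
          · intro hx
            exfalso
            rcases sR.zone d hdc h2 with hq | hs
            · linarith [hq.1]
            · linarith [hs.1]
          · intro hEad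
            exact absurd hEad (fun hEad => ncrossE G hG hn hEad hEcb hac hdc h2)
      · -- laSpan
        intro d h1 h2 hEad
        rcases lt_trichotomy d c with hdc | rfl | hdc
        · rw [eL d hdc]
          have h3 := sL.laSpan d h1 hdc hEad
          exact ⟨by linarith [h3.1], by linarith [h3.2]⟩
        · rw [eC]
          exact ⟨by rw [rcyhi]; linarith, by rw [rcylo]⟩
        · exact absurd hEad (fun hEad => ncrossE G hG hn hEad hEcb hac hdc h2)
      · -- bb
        intro d h1 h2
        rcases lt_trichotomy d c with hdc | rfl | hdc
        · rw [eL d hdc]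
          have hz := znL d h1 hdc
          have hhy := (ρL d).hy
          constructor
          · intro hEdb
            exact absurd hEdb (fun hEdb => ncrossE G hG hn hEac hEdb h1 hdc hcb)
          · rintro (he | ⟨he1, he2, he3⟩)
            · exfalso; linarith
            · exfalso; linarith
        · rw [eC]
          constructor
          · intro _; exact Or.inl rcylo
          · intro _; exact hEcb
        · rw [eR d hdc]
          have hsum : x1 + u + (Wb - u) = x1 + Wb := by ring
          rw [← hsum]
          exact sR.bb d hdc h2
      · -- bbQuad
        intro d h1 h2 hylo
        rcases lt_trichotomy d c with hdc | rfl | hdc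
        · exfalso
          rw [eL d hdc] at hylo
          linarith [(znL d h1 hdc).2]
        · rw [eC] at hylo ⊢
          refine ⟨by rw [rcxlo]; linarith, fun _ => by rw [rcxhi]; linarith,
            fun hjc => absurd hjc (by omega)⟩
        · rw [eR d hdc] at hylo ⊢
          have h3 := sR.bbQuad d hdc h2 hylo
          exact ⟨by linarith [h3.1], fun hdj => by linarith [h3.2.1 hdj],
            fun hjd => by linarith [h3.2.2 hjd]⟩
      · -- tmode
        intro hbj d h1 h2
        rcases lt_trichotomy d c with hdc | rfl | hdc
        · rw [eL d hdc]; linarith [tmL d h1 hdc]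
        · rw [eC, rcxhi]; linarith
        · rw [eR d hdc]; linarith [sR.tmode hbj d hdc h2]
      · -- disj
        intro d e h1 h2 h3 h4 hne
        rcases lt_trichotomy d c with hdc | hdc | hdc <;>
          rcases lt_trichotomy e c with hec | hec | hec
        · rw [eL d hdc, eL e hec]; exact sL.disj d e h1 hdc h3 hec hne
        · rw [eL d hdc, eC' e hec]
          exact (disj_int_y (show rc.yhi ≤ (ρL d).ylo by
            rw [rcyhi]; exact (znL d h1 hdc).2)).symm
        · rw [eL d hdc, eR e hec]
          exact disj_int_x (by linarith [tmL d h1 hdc, (xR e hec h4).1])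
        · rw [eC' d hdc, eL e hec]
          exact disj_int_y (show rc.yhi ≤ (ρL e).ylo by
            rw [rcyhi]; exact (znL e h3 hec).2)
        · omega
        · rw [eC' d hdc, eR e hec]
          exact disj_int_x (by rw [rcxhi]; exact (xR e hec h4).1)
        · rw [eR d hdc, eL e hec]
          exact (disj_int_x (by linarith [tmL e h3 hec, (xR d hdc h2).1])).symm
        · rw [eR d hdc, eC' e hec]
          exact (disj_int_x (by rw [rcxhi]; exact (xR d hdc h2).1)).symm
        · rw [eR d hdc, eR e hec]; exact sR.disj d e hdc h2 hec h4 hne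
      · -- contact
        intro d e h1 h2 h3 h4 hne
        rcases lt_trichotomy d c with hdc | hdc | hdc <;>
          rcases lt_trichotomy e c with hec | hec | hec
        · rw [eL d hdc, eL e hec]; exact sL.contact d e h1 hdc h3 hec hne
        · rw [eL d hdc, eC' e hec]; rw [hec]; exact LC d h1 hdc
        · rw [eL d hdc, eR e hec]
          exact iff_of_false (LRnc d e h1 hdc hec h4) (LRne d e h1 hdc hec h4)
        · rw [eC' d hdc, eL e hec, contact_comm, LC e h3 hec, hdc]
          exact ⟨fun hh => Esymm G hh, fun hh => Esymm G hh⟩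
        · omega
        · rw [eC' d hdc, eR e hec, hdc]; exact RC e hec h4
        · rw [eR d hdc, eL e hec, contact_comm]
          refine iff_of_false (LRnc e d h3 hec hdc h2) ?_
          exact fun hh => LRne e d h3 hec hdc h2 (Esymm G hh)
        · rw [eR d hdc, eC' e hec, contact_comm, RC d hdc h2, hec]
          exact ⟨fun hh => Esymm G hh, fun hh => Esymm G hh⟩
        · rw [eR d hdc, eR e hec]; exact sR.contact d e hdc h2 hec h4 hne
      · -- trexp
        intro d e h1 h2 h3 h4 hne hdj
        rcases lt_trichotomy d c with hdc | hdc | hdc <;>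
          rcases lt_trichotomy e c with hec | hec | hec
        · rw [eL d hdc, eL e hec]; exact sL.trexp d e h1 hdc h3 hec hne hdj
        · rw [eL d hdc, eC' e hec]
          intro hmem
          simp only [Rect.toSet, Set.mem_setOf_eq] at hmem
          obtain ⟨m1, m2, m3, m4⟩ := hmem
          have := (znL d h1 hdc).2
          have := (ρL d).hy
          linarith
        · rw [eL d hdc, eR e hec]
          intro hmem
          simp only [Rect.toSet, Set.mem_setOf_eq] at hmem
          obtain ⟨m1, m2, m3, m4⟩ := hmem
          linarith [tmL d h1 hdc, (xR e hec h4).1]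
        · rw [eC' d hdc, eL e hec]
          intro hmem
          simp only [Rect.toSet, Set.mem_setOf_eq] at hmem
          obtain ⟨m1, m2, m3, m4⟩ := hmem
          linarith [tmL e h3 hec]
        · omega
        · rw [eC' d hdc, eR e hec]
          intro hmem
          simp only [Rect.toSet, Set.mem_setOf_eq] at hmem
          obtain ⟨m1, m2, m3, m4⟩ := hmem
          rcases eq_or_lt_of_le (xR e hec h4).1 with heq | hgt
          · have hEce := (sR.la e hec h4).1 heq.symm
            have := (sR.laSpan e hec h4 hEce).1
            linarith
          · linarith
        · rw [eR d hdc, eL e hec]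
          intro hmem
          simp only [Rect.toSet, Set.mem_setOf_eq] at hmem
          obtain ⟨m1, m2, m3, m4⟩ := hmem
          linarith [tmL e h3 hec, (xR d hdc h2).1, (ρR d).hx]
        · rw [eR d hdc, eC' e hec]
          intro hmem
          simp only [Rect.toSet, Set.mem_setOf_eq] at hmem
          obtain ⟨m1, m2, m3, m4⟩ := hmem
          linarith [(xR d hdc h2).1, (ρR d).hx]
        · rw [eR d hdc, eR e hec]; exact sR.trexp d e hdc h2 hec h4 hne hdj
      · -- brexp
        intro d e h1 h2 h3 h4 hne hjd
        rcases lt_trichotomy d c with hdc | rfl | hdc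
        · exfalso; omega
        · exfalso; omega
        · rcases lt_trichotomy e c with hec | rfl | hec
          · rw [eR d hdc, eL e hec]
            intro hmem
            simp only [Rect.toSet, Set.mem_setOf_eq] at hmem
            obtain ⟨m1, m2, m3, m4⟩ := hmem
            linarith [tmL e h3 hec, (xR d hdc h2).1, (ρR d).hx]
          · rw [eR d hdc, eC]
            intro hmem
            simp only [Rect.toSet, Set.mem_setOf_eq] at hmem
            obtain ⟨m1, m2, m3, m4⟩ := hmem
            linarith [(xR d hdc h2).1, (ρR d).hx]
          · rw [eR d hdc, eR e hec]; exact sR.brexp d e hdc h2 hec h4 hne hjd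
    · -- CASE 2 : apex at or above the pivot (transition)
      have hD2 : 0 < D / 2 := by linarith
      set u := (KL + t) / Ha + Wb + KR / (D / 2) + 1 with hudef
      have hKLHa : 0 < (KL + t) / Ha := div_pos (by linarith) hHa
      have hKRD : 0 < KR / (D / 2) := div_pos (by linarith) hD2
      have huWb : Wb < u := by rw [hudef]; linarith
      have hu0 : 0 < u := by linarith
      set h := t / u with hhdef
      have hh0 : 0 < h := div_pos ht hu0
      have hhu : u * h = t := by rw [hhdef]; field_simp
      have hu_lo : (KL + t) / Ha < u := by rw [hudef]; linarith
      have hHau : KL + t < Ha * u := by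
        have h2 := (div_lt_iff₀ hHa).mp hu_lo
        have h3 : u * Ha = Ha * u := mul_comm u Ha
        linarith
      have hhHa : h < Ha := by
        rw [hhdef, div_lt_iff₀ hu0]
        have h3 : Ha * u = u * Ha := mul_comm Ha u
        linarith
      have capL : KL < (Ha - h) * u := by
        have h2 : (Ha - h) * u = Ha * u - t := by rw [← hhu]; ring
        rw [h2]; linarith
      have capB : KR < (u - Wb) * (D / 2) := by
        have h2 : KR / (D / 2) * (D / 2) = KR := div_mul_cancel₀ _ (ne_of_gt hD2)
        have h3 : u - Wb = (KL + t) / Ha + KR / (D / 2) + 1 := by rw [hudef]; ring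
        rw [h3]
        have h4 : ((KL + t) / Ha + KR / (D / 2) + 1) * (D / 2)
            = (KL + t) / Ha * (D / 2) + KR / (D / 2) * (D / 2) + D / 2 := by ring
        rw [h4, h2]
        nlinarith [mul_pos hKLHa hD2]
      set rc : Rect := ⟨x1, x1 + u, y1, y1 + h, by linarith, by linarith⟩ with hrc
      have rcxlo : rc.xlo = x1 := rfl
      have rcxhi : rc.xhi = x1 + u := rfl
      have rcylo : rc.ylo = y1 := rfl
      have rcyhi : rc.yhi = y1 + h := rfl
      obtain ⟨ρL, sL⟩ := ih (N - 1) (by omega) j a c (by omega) hac (by omega) hEac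
        x1 (y1 + h) (Ha - h) u h (by linarith) hu0 hh0 capL
      obtain ⟨σ, sS⟩ := ih (N - 1) (by omega) n c b (by omega) hcb hbn hEcb
        (-y1) (x1 + Wb) (u - Wb) (D / 2) 1 (by linarith) hD2 one_pos capB
      classical
      set ρR : ℕ → Rect := fun e => rot (σ e) with hρRdef
      have hρR : ∀ e, ρR e = rot (σ e) := fun _ => rfl
      have rxlo : ∀ e, (ρR e).xlo = (σ e).ylo := fun e => rfl
      have rxhi : ∀ e, (ρR e).xhi = (σ e).yhi := fun e => rfl
      have rylo : ∀ e, (ρR e).ylo = -(σ e).xhi := fun e => rfl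
      have ryhi : ∀ e, (ρR e).yhi = -(σ e).xlo := fun e => rfl
      have preq : ∀ e, c < e → e < b → -y1 ≤ (σ e).xlo ∧ x1 + Wb ≤ (σ e).ylo := by
        intro e h1 h2
        rcases sS.zone e h1 h2 with hq | hs
        · exact hq
        · exfalso; have := hs.2.2.2; omega
      have rzn : ∀ e, c < e → e < b →
          x1 + Wb ≤ (ρR e).xlo ∧ (ρR e).yhi ≤ y1 ∧ y1 - D / 2 < (ρR e).ylo := by
        intro e h1 h2
        have hq := preq e h1 h2
        have htm := sS.tmode (by omega) e h1 h2
        rw [rxlo, ryhi, rylo]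
        exact ⟨hq.2, by linarith [hq.1], by linarith [htm]⟩
      have rla : ∀ e, c < e → e < b → ((ρR e).yhi = y1 ↔ E G c e) := by
        intro e h1 h2
        have hl := sS.la e h1 h2
        rw [ryhi]
        constructor
        · intro hh; exact hl.1 (by linarith)
        · intro hh; have := hl.2 hh; linarith
      have rspan : ∀ e, c < e → e < b → E G c e → (ρR e).xhi < x1 + u := by
        intro e h1 h2 hEce
        have h3 := (sS.laSpan e h1 h2 hEce).1
        rw [rxhi]; linarith
      have rbb : ∀ e, c < e → e < b → (E G e b ↔ (ρR e).xlo = x1 + Wb) := by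
        intro e h1 h2
        rw [sS.bb e h1 h2, rxlo]
        constructor
        · rintro (hh | ⟨hh1, hh2, hh3⟩)
          · exact hh
          · exfalso; omega
        · exact fun hh => Or.inl hh
      have rdisj : ∀ d e, c < d → d < b → c < e → e < b → d ≠ e →
          Disjoint (ρR d).interior (ρR e).interior := by
        intro d e h1 h2 h3 h4 hne
        rw [hρR d, hρR e]
        exact disj_rot (sS.disj d e h1 h2 h3 h4 hne)
      have rcontact : ∀ d e, c < d → d < b → c < e → e < b → d ≠ e →
          (Rect.Contact (ρR d) (ρR e) ↔ E G d e) := by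
        intro d e h1 h2 h3 h4 hne
        rw [hρR d, hρR e, contact_rot]
        exact sS.contact d e h1 h2 h3 h4 hne
      have rbrexp : ∀ d e, c < d → d < b → c < e → e < b → d ≠ e →
          ((ρR d).xhi, (ρR d).ylo) ∉ (ρR e).toSet := by
        intro d e h1 h2 h3 h4 hne hmem
        rw [rxhi d, rylo d, hρR e] at hmem
        have h6 := mem_rot.mp hmem
        simp only [neg_neg] at h6
        exact sS.trexp d e h1 h2 h3 h4 hne (by omega) h6
      -- the combined family
      set ρ : ℕ → Rect := fun d => if d < c then ρL d else if d = c then rc else ρR d with hρ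
      have eL : ∀ d, d < c → ρ d = ρL d := by
        intro d hdc
        show (if d < c then ρL d else if d = c then rc else ρR d) = ρL d
        rw [if_pos hdc]
      have eC : ρ c = rc := by
        show (if c < c then ρL c else if c = c then rc else ρR c) = rc
        rw [if_neg (lt_irrefl c), if_pos rfl]
      have eR : ∀ d, c < d → ρ d = ρR d := by
        intro d hdc
        show (if d < c then ρL d else if d = c then rc else ρR d) = ρR d
        rw [if_neg (by omega : ¬ d < c), if_neg (by omega : ¬ d = c)]
      have eC' : ∀ d, d = c → ρ d = rc := by
        intro d hd; rw [hd]; exact eC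
      have znL : ∀ e, a < e → e < c →
          (x1 ≤ (ρL e).xlo ∧ y1 + h ≤ (ρL e).ylo) ∨
          (x1 + u ≤ (ρL e).xlo ∧ y1 < (ρL e).ylo ∧ (ρL e).yhi ≤ y1 + h ∧ j < e) := by
        intro e h1 h2
        rcases sL.zone e h1 h2 with hq | hs
        · exact Or.inl hq
        · exact Or.inr ⟨hs.1, by linarith [hs.2.1], hs.2.2.1, hs.2.2.2⟩
      have zLy : ∀ e, a < e → e < c → y1 < (ρL e).ylo := by
        intro e h1 h2
        rcases znL e h1 h2 with hq | hs
        · linarith [hq.2]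
        · exact hs.2.1
      have zLx : ∀ e, a < e → e < c → x1 ≤ (ρL e).xlo := by
        intro e h1 h2
        rcases znL e h1 h2 with hq | hs
        · exact hq.1
        · linarith [hs.1]
      have LC : ∀ e, a < e → e < c → (Rect.Contact (ρL e) rc ↔ E G e c) := by
        intro e h1 h2
        rw [sL.bb e h1 h2]
        have hhx := (ρL e).hx
        have hhy := (ρL e).hy
        constructor
        · rintro (⟨he | he, hov⟩ | ⟨he | he, hov⟩)
          · exfalso; linarith [zLx e h1 h2, he]
          · rcases znL e h1 h2 with hq | hs
            · exfalso; simp only [lt_min_iff, max_lt_iff] at hov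
              linarith [hq.2, hov.1.2]
            · exact Or.inr ⟨by linarith [he], hs.2.2.1, hs.2.2.2⟩
          · exfalso; linarith [zLy e h1 h2, he]
          · exact Or.inl (by linarith [he])
        · rintro (he | ⟨he1, he2, he3⟩)
          · have hq := sL.bbQuad e h1 h2 he
            refine Or.inr ⟨Or.inr (by linarith), ?_⟩
            simp only [lt_min_iff, max_lt_iff]
            have hx0 := zLx e h1 h2
            exact ⟨⟨by linarith, by linarith [hq.1]⟩, by linarith, by linarith⟩
          · refine Or.inl ⟨Or.inr (by linarith [he1]), ?_⟩
            simp only [lt_min_iff, max_lt_iff]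
            have hy1 := zLy e h1 h2
            exact ⟨⟨by linarith, by linarith⟩, by linarith, by linarith⟩
      have RC : ∀ e, c < e → e < b → (Rect.Contact rc (ρR e) ↔ E G c e) := by
        intro e h1 h2
        rw [← rla e h1 h2]
        have hz := rzn e h1 h2
        have hhx := (ρR e).hx
        have hhy := (ρR e).hy
        constructor
        · rintro (⟨he | he, hov⟩ | ⟨he | he, hov⟩)
          · exfalso; simp only [lt_min_iff, max_lt_iff] at hov
            linarith [hov.2.1, hz.2.1]
          · exfalso; linarith [he, hz.1]
          · exfalso; linarith [he, hz.2.1]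
          · linarith [he]
        · intro he
          have hsp := rspan e h1 h2 ((rla e h1 h2).1 he)
          refine Or.inr ⟨Or.inr (by linarith [he]), ?_⟩
          simp only [lt_min_iff, max_lt_iff]
          exact ⟨⟨by linarith, by linarith [hz.1]⟩, by linarith [hz.1], by linarith⟩
      have LRnc : ∀ d e, a < d → d < c → c < e → e < b →
          ¬ Rect.Contact (ρL d) (ρR e) := by
        intro d e h1 h2 h3 h4
        have hyL := zLy d h1 h2
        have hzR := rzn e h3 h4
        have hy1 := (ρL d).hy
        have hy2 := (ρR e).hy
        rintro (⟨he | he, hov⟩ | ⟨he | he, hov⟩) <;>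
          simp only [lt_min_iff, max_lt_iff] at hov
        · linarith [hov.1.2, hzR.2.1]
        · linarith [hov.1.2, hzR.2.1]
        · linarith [he, hzR.2.1]
        · linarith [he, hzR.2.1]
      have LRne : ∀ d e, a < d → d < c → c < e → e < b → ¬ E G d e := by
        intro d e h1 h2 h3 h4 hEde
        exact ncrossE G hG hn hEac hEde h1 h2 h3
      refine ⟨ρ, ?_, ?_, ?_, ?_, ?_, ?_, ?_, ?_, ?_, ?_, ?_⟩
      · -- area
        intro d h1 h2
        rcases lt_trichotomy d c with hdc | hdc | hdc
        · rw [eL d hdc]; exact sL.area d h1 hdc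
        · rw [eC' d hdc]
          show (x1 + u - x1) * (y1 + h - y1) = w' d
          rw [show x1 + u - x1 = u by ring, show y1 + h - y1 = h by ring, hdc]
          exact hhu
        · rw [eR d hdc, hρR d, rot_area]; exact sS.area d hdc h2
      · -- zone
        intro d h1 h2
        rcases lt_trichotomy d c with hdc | hdc | hdc
        · rw [eL d hdc]
          rcases znL d h1 hdc with hq | hs
          · exact Or.inl ⟨hq.1, by linarith [hq.2]⟩
          · exact Or.inl ⟨by linarith [hs.1], by linarith [hs.2.1]⟩
        · rw [eC' d hdc]
          exact Or.inl ⟨le_of_eq rcxlo.symm, le_of_eq rcylo.symm⟩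
        · rw [eR d hdc]
          have hz := rzn d hdc h2
          exact Or.inr ⟨hz.1, by linarith [hz.2.2], hz.2.1, by omega⟩
      · -- la
        intro d h1 h2
        rcases lt_trichotomy d c with hdc | hdc | hdc
        · rw [eL d hdc]; exact sL.la d h1 hdc
        · rw [eC' d hdc]
          constructor
          · intro _; rw [hdc]; exact hEac
          · intro _; exact rcxlo
        · rw [eR d hdc]
          constructor
          · intro hx
            exfalso
            linarith [(rzn d hdc h2).1]
          · intro hEad
            exact absurd hEad (fun hEad => ncrossE G hG hn hEad hEcb hac hdc h2)
      · -- laSpan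
        intro d h1 h2 hEad
        rcases lt_trichotomy d c with hdc | hdc | hdc
        · rw [eL d hdc]
          have h3 := sL.laSpan d h1 hdc hEad
          exact ⟨by linarith [h3.1], by linarith [h3.2]⟩
        · rw [eC' d hdc]
          exact ⟨by rw [rcyhi]; linarith, by rw [rcylo]⟩
        · exact absurd hEad (fun hEad => ncrossE G hG hn hEad hEcb hac hdc h2)
      · -- bb
        intro d h1 h2
        rcases lt_trichotomy d c with hdc | hdc | hdc
        · rw [eL d hdc]
          have hy1 := zLy d h1 hdc
          have hhy := (ρL d).hy
          constructor
          · intro hEdb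
            exact absurd hEdb (fun hEdb => ncrossE G hG hn hEac hEdb h1 hdc hcb)
          · rintro (he | ⟨he1, he2, he3⟩)
            · exfalso; linarith
            · exfalso; linarith
        · rw [eC' d hdc]
          constructor
          · intro _; exact Or.inl rcylo
          · intro _; rw [hdc]; exact hEcb
        · rw [eR d hdc, rbb d hdc h2]
          have hz := rzn d hdc h2
          have hhy := (ρR d).hy
          constructor
          · intro hh; exact Or.inr ⟨hh, hz.2.1, by omega⟩
          · rintro (hh | ⟨hh, _, _⟩)
            · exfalso; linarith [hz.2.1]
            · exact hh
      · -- bbQuad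
        intro d h1 h2 hylo
        rcases lt_trichotomy d c with hdc | hdc | hdc
        · exfalso
          rw [eL d hdc] at hylo
          linarith [zLy d h1 hdc]
        · rw [eC' d hdc] at hylo ⊢
          refine ⟨by rw [rcxlo]; linarith, fun hlt => absurd hlt (by omega),
            fun _ => by rw [rcxhi]; linarith⟩
        · exfalso
          rw [eR d hdc] at hylo
          have hz := rzn d hdc h2
          linarith [(ρR d).hy, hz.2.1]
      · -- tmode
        intro hbj d h1 h2
        omega
      · -- disj
        intro d e h1 h2 h3 h4 hne
        rcases lt_trichotomy d c with hdc | hdc | hdc <;>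
          rcases lt_trichotomy e c with hec | hec | hec
        · rw [eL d hdc, eL e hec]; exact sL.disj d e h1 hdc h3 hec hne
        · rw [eL d hdc, eC' e hec]
          rcases znL d h1 hdc with hq | hs
          · exact (disj_int_y (show rc.yhi ≤ (ρL d).ylo by rw [rcyhi]; exact hq.2)).symm
          · exact (disj_int_x (show rc.xhi ≤ (ρL d).xlo by rw [rcxhi]; exact hs.1)).symm
        · rw [eL d hdc, eR e hec]
          exact (disj_int_y (show (ρR e).yhi ≤ (ρL d).ylo by
            linarith [(rzn e hec h4).2.1, zLy d h1 hdc])).symm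
        · rw [eC' d hdc, eL e hec]
          rcases znL e h3 hec with hq | hs
          · exact disj_int_y (show rc.yhi ≤ (ρL e).ylo by rw [rcyhi]; exact hq.2)
          · exact disj_int_x (show rc.xhi ≤ (ρL e).xlo by rw [rcxhi]; exact hs.1)
        · omega
        · rw [eC' d hdc, eR e hec]
          exact (disj_int_y (show (ρR e).yhi ≤ rc.ylo by
            rw [rcylo]; exact (rzn e hec h4).2.1)).symm
        · rw [eR d hdc, eL e hec]
          exact disj_int_y (show (ρR d).yhi ≤ (ρL e).ylo by
            linarith [(rzn d hdc h2).2.1, zLy e h3 hec])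
        · rw [eR d hdc, eC' e hec]
          exact disj_int_y (show (ρR d).yhi ≤ rc.ylo by
            rw [rcylo]; exact (rzn d hdc h2).2.1)
        · rw [eR d hdc, eR e hec]; exact rdisj d e hdc h2 hec h4 hne
      · -- contact
        intro d e h1 h2 h3 h4 hne
        rcases lt_trichotomy d c with hdc | hdc | hdc <;>
          rcases lt_trichotomy e c with hec | hec | hec
        · rw [eL d hdc, eL e hec]; exact sL.contact d e h1 hdc h3 hec hne
        · rw [eL d hdc, eC' e hec]; rw [hec]; exact LC d h1 hdc
        · rw [eL d hdc, eR e hec]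
          exact iff_of_false (LRnc d e h1 hdc hec h4) (LRne d e h1 hdc hec h4)
        · rw [eC' d hdc, eL e hec, contact_comm, LC e h3 hec, hdc]
          exact ⟨fun hh => Esymm G hh, fun hh => Esymm G hh⟩
        · omega
        · rw [eC' d hdc, eR e hec, hdc]; exact RC e hec h4
        · rw [eR d hdc, eL e hec, contact_comm]
          refine iff_of_false (LRnc e d h3 hec hdc h2) ?_
          exact fun hh => LRne e d h3 hec hdc h2 (Esymm G hh)
        · rw [eR d hdc, eC' e hec, contact_comm, RC d hdc h2, hec]
          exact ⟨fun hh => Esymm G hh, fun hh => Esymm G hh⟩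
        · rw [eR d hdc, eR e hec]; exact rcontact d e hdc h2 hec h4 hne
      · -- trexp
        intro d e h1 h2 h3 h4 hne hdj
        rcases lt_trichotomy d c with hdc | hdc | hdc <;>
          rcases lt_trichotomy e c with hec | hec | hec
        · rw [eL d hdc, eL e hec]; exact sL.trexp d e h1 hdc h3 hec hne hdj
        · rw [eL d hdc, eC' e hec]
          intro hmem
          simp only [Rect.toSet, Set.mem_setOf_eq] at hmem
          obtain ⟨m1, m2, m3, m4⟩ := hmem
          rcases znL d h1 hdc with hq | hs
          · linarith [(ρL d).hy, hq.2]
          · omega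
        · rw [eL d hdc, eR e hec]
          intro hmem
          simp only [Rect.toSet, Set.mem_setOf_eq] at hmem
          obtain ⟨m1, m2, m3, m4⟩ := hmem
          rcases znL d h1 hdc with hq | hs
          · linarith [(ρL d).hy, hq.2, (rzn e hec h4).2.1]
          · omega
        · rw [eC' d hdc, eL e hec]
          intro hmem
          simp only [Rect.toSet, Set.mem_setOf_eq] at hmem
          obtain ⟨m1, m2, m3, m4⟩ := hmem
          have htm := sL.tmode (by omega) e h3 hec
          linarith
        · omega
        · rw [eC' d hdc, eR e hec]
          intro hmem
          simp only [Rect.toSet, Set.mem_setOf_eq] at hmem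
          obtain ⟨m1, m2, m3, m4⟩ := hmem
          linarith [(rzn e hec h4).2.1]
        · omega
        · omega
        · omega
      · -- brexp
        intro d e h1 h2 h3 h4 hne hjd
        rcases lt_trichotomy d c with hdc | hdc | hdc <;>
          rcases lt_trichotomy e c with hec | hec | hec
        · rw [eL d hdc, eL e hec]; exact sL.brexp d e h1 hdc h3 hec hne hjd
        · rw [eL d hdc, eC' e hec]
          intro hmem
          simp only [Rect.toSet, Set.mem_setOf_eq] at hmem
          obtain ⟨m1, m2, m3, m4⟩ := hmem
          rcases znL d h1 hdc with hq | hs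
          · have he2 : (ρL d).ylo = y1 + h := le_antisymm m4 hq.2
            have h5 := (sL.bbQuad d h1 hdc he2).2.2 (by omega)
            linarith
          · linarith [(ρL d).hx, hs.1]
        · rw [eL d hdc, eR e hec]
          intro hmem
          simp only [Rect.toSet, Set.mem_setOf_eq] at hmem
          obtain ⟨m1, m2, m3, m4⟩ := hmem
          linarith [zLy d h1 hdc, (rzn e hec h4).2.1]
        · rw [eC' d hdc, eL e hec]
          intro hmem
          simp only [Rect.toSet, Set.mem_setOf_eq] at hmem
          obtain ⟨m1, m2, m3, m4⟩ := hmem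
          linarith [zLy e h3 hec]
        · omega
        · rw [eC' d hdc, eR e hec]
          intro hmem
          simp only [Rect.toSet, Set.mem_setOf_eq] at hmem
          obtain ⟨m1, m2, m3, m4⟩ := hmem
          have hey : (ρR e).yhi = y1 := le_antisymm (rzn e hec h4).2.1 m4
          have h5 := rspan e hec h4 ((rla e hec h4).1 hey)
          linarith
        · rw [eR d hdc, eL e hec]
          intro hmem
          simp only [Rect.toSet, Set.mem_setOf_eq] at hmem
          obtain ⟨m1, m2, m3, m4⟩ := hmem
          linarith [zLy e h3 hec, (rzn d hdc h2).2.1, (ρR d).hy]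
        · rw [eR d hdc, eC' e hec]
          intro hmem
          simp only [Rect.toSet, Set.mem_setOf_eq] at hmem
          obtain ⟨m1, m2, m3, m4⟩ := hmem
          linarith [(rzn d hdc h2).2.1, (ρR d).hy]
        · rw [eR d hdc, eR e hec]; exact rbrexp d e hdc h2 hec h4 hne

omit hG hn hw'

end DSL

open DSL in
set_option maxHeartbeats 4000000 in
/-- Every maximal outerplanar graph with outer cycle `0,…,n-1`
and positive weights, and every pivot vertex `i`, admits a proportional
rectangle-contact representation in which the rectangle of vertex `0` is leftmost,
the rectangle of vertex `n-1` is bottommost among the remaining ones, the top-right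
corners of the rectangles of vertices `0,…,i` are exposed, and the bottom-right
corners of the rectangles of vertices `i,…,n-1` are exposed. -/
theorem double_staircase_layout_exists
    {n : ℕ} (hn : 3 ≤ n) (G : SimpleGraph (Fin n)) (hG : MaxOuterplanar n G)
    (w : Fin n → ℝ) (hw : ∀ v, 0 < w v) (i : Fin n) :
    ∃ ρ : Fin n → Rect,
      (∀ v, (ρ v).area = w v) ∧
      (∀ u v, u ≠ v → Disjoint (ρ u).interior (ρ v).interior) ∧
      (∀ u v, u ≠ v → (G.Adj u v ↔ Rect.Contact (ρ u) (ρ v))) ∧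
      (∀ v, (ρ ⟨0, by omega⟩).xlo ≤ (ρ v).xlo) ∧
      (∀ v, v ≠ ⟨0, by omega⟩ → (ρ ⟨n - 1, by omega⟩).ylo ≤ (ρ v).ylo) ∧
      (∀ v, v ≤ i → ∀ u, u ≠ v → ((ρ v).xhi, (ρ v).yhi) ∉ (ρ u).toSet) ∧
      (∀ v, i ≤ v → ∀ u, u ≠ v → ((ρ v).xhi, (ρ v).ylo) ∉ (ρ u).toSet) := by
  classical
  set w' : ℕ → ℝ := fun v => if h : v < n then w ⟨v, h⟩ else 1 with hw'def
  have hw' : ∀ v, 0 < w' v := by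
    intro v
    show (if h : v < n then w ⟨v, h⟩ else 1) > 0
    split
    · exact hw _
    · exact one_pos
  have wconv : ∀ v : Fin n, w' (v : ℕ) = w v := by
    intro v
    show (if h : (v : ℕ) < n then w ⟨(v : ℕ), h⟩ else 1) = w v
    rw [dif_pos v.isLt]
  set j : ℕ := (i : ℕ) with hjdef
  set d0 : ℝ := w' (n - 1) with hd0def
  have hd0 : 0 < d0 := hw' (n - 1)
  set Ha : ℝ := Kcap w' 0 (n - 1) + 1 with hHadef
  have hK1 : 1 ≤ Kcap w' 0 (n - 1) := Kcap_ge_one w' hw' 0 (n - 1)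
  have hHa : 0 < Ha := by linarith
  have hE0b : E G 0 (n - 1) := Elast G hG hn
  obtain ⟨ρM, sM⟩ := Mlem G hG hn w' hw' n j 0 (n - 1) (by omega) (by omega) le_rfl hE0b
    0 0 Ha 1 d0 hHa one_pos hd0 (by rw [mul_one]; linarith)
  set e0 : ℝ := w' 0 / (Ha + d0 + 2) with he0def
  have he0 : 0 < e0 := div_pos (hw' 0) (by linarith)
  set r0 : Rect := ⟨-e0, 0, -d0 - 1, Ha + 1, by linarith, by linarith⟩ with hr0
  set rb : Rect := ⟨0, 1, -d0, 0, by linarith, by linarith⟩ with hrb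
  have r0xlo : r0.xlo = -e0 := rfl
  have r0xhi : r0.xhi = 0 := rfl
  have r0ylo : r0.ylo = -d0 - 1 := rfl
  have r0yhi : r0.yhi = Ha + 1 := rfl
  have rbxlo : rb.xlo = 0 := rfl
  have rbxhi : rb.xhi = 1 := rfl
  have rbylo : rb.ylo = -d0 := rfl
  have rbyhi : rb.yhi = 0 := rfl
  set ρ : Fin n → Rect := fun v =>
    if (v : ℕ) = 0 then r0 else if (v : ℕ) = n - 1 then rb else ρM (v : ℕ) with hρ
  have rho0 : ∀ v : Fin n, (v : ℕ) = 0 → ρ v = r0 := by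
    intro v hv
    show (if (v : ℕ) = 0 then r0 else if (v : ℕ) = n - 1 then rb else ρM (v : ℕ)) = r0
    rw [if_pos hv]
  have rhob : ∀ v : Fin n, (v : ℕ) = n - 1 → ρ v = rb := by
    intro v hv
    show (if (v : ℕ) = 0 then r0 else if (v : ℕ) = n - 1 then rb else ρM (v : ℕ)) = rb
    rw [if_neg (by omega), if_pos hv]
  have rhoi : ∀ v : Fin n, (v : ℕ) ≠ 0 → (v : ℕ) ≠ n - 1 → ρ v = ρM (v : ℕ) := by
    intro v hv1 hv2
    show (if (v : ℕ) = 0 then r0 else if (v : ℕ) = n - 1 then rb else ρM (v : ℕ)) = ρM (v : ℕ)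
    rw [if_neg hv1, if_neg hv2]
  have hvin : ∀ v : Fin n, (v : ℕ) ≠ 0 → (v : ℕ) ≠ n - 1 → 0 < (v : ℕ) ∧ (v : ℕ) < n - 1 := by
    intro v h1 h2
    have := v.isLt
    omega
  -- handy inner-rectangle facts
  have zx : ∀ k, 0 < k → k < n - 1 → 0 ≤ (ρM k).xlo := by
    intro k h1 h2
    rcases sM.zone k h1 h2 with hq | hs
    · exact hq.1
    · linarith [hs.1]
  have zy : ∀ k, 0 < k → k < n - 1 → -d0 < (ρM k).ylo := by
    intro k h1 h2
    rcases sM.zone k h1 h2 with hq | hs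
    · linarith [hq.2]
    · linarith [hs.2.1]
  have zxhi : ∀ k, 0 < k → k < n - 1 → 0 < (ρM k).xhi := by
    intro k h1 h2
    linarith [zx k h1 h2, (ρM k).hx]
  -- contacts with the two anchors
  have C0b : Rect.Contact r0 rb := by
    refine Or.inl ⟨Or.inl (by rw [r0xhi, rbxlo]), ?_⟩
    simp only [lt_min_iff, max_lt_iff, r0ylo, r0yhi, rbylo, rbyhi]
    exact ⟨⟨by linarith, by linarith⟩, by linarith, by linarith⟩
  have C0M : ∀ k, 0 < k → k < n - 1 → (Rect.Contact r0 (ρM k) ↔ E G 0 k) := by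
    intro k h1 h2
    have hx := (ρM k).hx
    have hy := (ρM k).hy
    have hzx := zx k h1 h2
    have hzy := zy k h1 h2
    constructor
    · rintro (⟨he | he, hov⟩ | ⟨he | he, hov⟩)
      · exact (sM.la k h1 h2).1 (by linarith [he])
      · exfalso; linarith [he]
      · exfalso; simp only [lt_min_iff, max_lt_iff] at hov
        linarith [hov.2.1]
      · exfalso; linarith [he]
    · intro hEk
      have hxl := (sM.la k h1 h2).2 hEk
      have hsp := sM.laSpan k h1 h2 hEk
      refine Or.inl ⟨Or.inl (by rw [r0xhi]; linarith [hxl]), ?_⟩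
      simp only [lt_min_iff, max_lt_iff, r0ylo, r0yhi]
      exact ⟨⟨by linarith [hsp.2], by linarith [hsp.2, hy]⟩, by linarith [hsp.1, hy], by linarith [hsp.1]⟩
  have CbM : ∀ k, 0 < k → k < n - 1 → (Rect.Contact rb (ρM k) ↔ E G k (n - 1)) := by
    intro k h1 h2
    have hx := (ρM k).hx
    have hy := (ρM k).hy
    have hzx := zx k h1 h2
    have hzy := zy k h1 h2
    constructor
    · rintro (⟨he | he, hov⟩ | ⟨he | he, hov⟩)
      · -- rb.xhi = xlo : strip toucher
        simp only [lt_min_iff, max_lt_iff] at hov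
        rcases sM.zone k h1 h2 with hq | hs
        · exfalso; linarith [hov.2.1, hq.2]
        · exact (sM.bb k h1 h2).2 (Or.inr ⟨by linarith [he], hs.2.2.1, hs.2.2.2⟩)
      · exfalso; linarith [he]
      · exact (sM.bb k h1 h2).2 (Or.inl (by linarith [he]))
      · exfalso; linarith [he]
    · intro hEk
      rcases (sM.bb k h1 h2).1 hEk with hq | hs
      · have hbq := sM.bbQuad k h1 h2 hq
        refine Or.inr ⟨Or.inl (by rw [rbyhi]; linarith [hq]), ?_⟩
        simp only [lt_min_iff, max_lt_iff, rbxlo, rbxhi]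
        exact ⟨⟨by linarith, by linarith⟩, by linarith [hbq.1], by linarith⟩
      · refine Or.inl ⟨Or.inl (by rw [rbxhi]; linarith [hs.1]), ?_⟩
        simp only [lt_min_iff, max_lt_iff, rbylo, rbyhi]
        exact ⟨⟨by linarith, by linarith [hs.2.1]⟩, by linarith, by linarith [hs.2.1]⟩
  have adjE : ∀ u v : Fin n, G.Adj u v ↔ E G (u : ℕ) (v : ℕ) :=
    fun u v => ⟨EofAdj G, AdjofE G⟩
  refine ⟨ρ, ?_, ?_, ?_, ?_, ?_, ?_, ?_⟩
  · -- areas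
    intro v
    rcases eq_or_ne (v : ℕ) 0 with hv0 | hv0
    · rw [rho0 v hv0, ← wconv v, hv0]
      show (0 - -e0) * (Ha + 1 - (-d0 - 1)) = w' 0
      have hden : Ha + d0 + 2 ≠ 0 := ne_of_gt (by linarith)
      have h9 : (0 - -e0) * (Ha + 1 - (-d0 - 1)) = e0 * (Ha + d0 + 2) := by ring
      rw [h9, he0def, div_mul_cancel₀ _ hden]
    · rcases eq_or_ne (v : ℕ) (n - 1) with hvb | hvb
      · rw [rhob v hvb, ← wconv v, hvb]
        show (1 - 0) * (0 - -d0) = w' (n - 1)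
        rw [hd0def]; ring
      · obtain ⟨h1, h2⟩ := hvin v hv0 hvb
        rw [rhoi v hv0 hvb, ← wconv v]
        exact sM.area _ h1 h2
  · -- disjoint interiors
    intro u v huv
    have hne : (u : ℕ) ≠ (v : ℕ) := fun hh => huv (Fin.ext hh)
    rcases eq_or_ne (u : ℕ) 0 with hu0 | hu0 <;> rcases eq_or_ne (v : ℕ) 0 with hv0 | hv0
    · omega
    · rw [rho0 u hu0]
      rcases eq_or_ne (v : ℕ) (n - 1) with hvb | hvb
      · rw [rhob v hvb]
        exact disj_int_x (by rw [r0xhi, rbxlo])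
      · obtain ⟨h1, h2⟩ := hvin v hv0 hvb
        rw [rhoi v hv0 hvb]
        exact disj_int_x (by rw [r0xhi]; exact zx _ h1 h2)
    · rw [rho0 v hv0]
      rcases eq_or_ne (u : ℕ) (n - 1) with hub | hub
      · rw [rhob u hub]
        exact (disj_int_x (by rw [r0xhi, rbxlo])).symm
      · obtain ⟨h1, h2⟩ := hvin u hu0 hub
        rw [rhoi u hu0 hub]
        exact (disj_int_x (by rw [r0xhi]; exact zx _ h1 h2)).symm
    · rcases eq_or_ne (u : ℕ) (n - 1) with hub | hub <;>
        rcases eq_or_ne (v : ℕ) (n - 1) with hvb | hvb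
      · omega
      · obtain ⟨h1, h2⟩ := hvin v hv0 hvb
        rw [rhob u hub, rhoi v hv0 hvb]
        rcases sM.zone _ h1 h2 with hq | hs
        · exact disj_int_y (by rw [rbyhi]; exact hq.2)
        · exact disj_int_x (by rw [rbxhi]; linarith [hs.1])
      · obtain ⟨h1, h2⟩ := hvin u hu0 hub
        rw [rhob v hvb, rhoi u hu0 hub]
        rcases sM.zone _ h1 h2 with hq | hs
        · exact (disj_int_y (by rw [rbyhi]; exact hq.2)).symm
        · exact (disj_int_x (by rw [rbxhi]; linarith [hs.1])).symm
      · obtain ⟨hu1, hu2⟩ := hvin u hu0 hub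
        obtain ⟨hv1, hv2⟩ := hvin v hv0 hvb
        rw [rhoi u hu0 hub, rhoi v hv0 hvb]
        exact sM.disj _ _ hu1 hu2 hv1 hv2 hne
  · -- adjacency iff contact
    intro u v huv
    have hne : (u : ℕ) ≠ (v : ℕ) := fun hh => huv (Fin.ext hh)
    rw [adjE u v]
    rcases eq_or_ne (u : ℕ) 0 with hu0 | hu0 <;> rcases eq_or_ne (v : ℕ) 0 with hv0 | hv0
    · omega
    · rw [rho0 u hu0, hu0]
      rcases eq_or_ne (v : ℕ) (n - 1) with hvb | hvb
      · rw [rhob v hvb, hvb]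
        exact iff_of_true hE0b C0b
      · obtain ⟨h1, h2⟩ := hvin v hv0 hvb
        rw [rhoi v hv0 hvb]
        exact (C0M _ h1 h2).symm
    · rw [rho0 v hv0, hv0]
      rcases eq_or_ne (u : ℕ) (n - 1) with hub | hub
      · rw [rhob u hub, hub, contact_comm]
        exact iff_of_true (Esymm G hE0b) C0b
      · obtain ⟨h1, h2⟩ := hvin u hu0 hub
        rw [rhoi u hu0 hub, contact_comm, C0M _ h1 h2]
        exact ⟨fun hh => Esymm G hh, fun hh => Esymm G hh⟩
    · rcases eq_or_ne (u : ℕ) (n - 1) with hub | hub <;>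
        rcases eq_or_ne (v : ℕ) (n - 1) with hvb | hvb
      · omega
      · obtain ⟨h1, h2⟩ := hvin v hv0 hvb
        rw [rhob u hub, rhoi v hv0 hvb, hub, CbM _ h1 h2]
        exact ⟨fun hh => Esymm G hh, fun hh => Esymm G hh⟩
      · obtain ⟨h1, h2⟩ := hvin u hu0 hub
        rw [rhob v hvb, rhoi u hu0 hub, hvb, contact_comm, CbM _ h1 h2]
      · obtain ⟨hu1, hu2⟩ := hvin u hu0 hub
        obtain ⟨hv1, hv2⟩ := hvin v hv0 hvb
        rw [rhoi u hu0 hub, rhoi v hv0 hvb]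
        exact (sM.contact _ _ hu1 hu2 hv1 hv2 hne).symm
  · -- vertex 0 leftmost
    intro v
    have h0 : ((⟨0, by omega⟩ : Fin n) : ℕ) = 0 := rfl
    rw [rho0 _ h0, r0xlo]
    rcases eq_or_ne (v : ℕ) 0 with hv0 | hv0
    · rw [rho0 v hv0, r0xlo]
    · rcases eq_or_ne (v : ℕ) (n - 1) with hvb | hvb
      · rw [rhob v hvb, rbxlo]; linarith
      · obtain ⟨h1, h2⟩ := hvin v hv0 hvb
        rw [rhoi v hv0 hvb]
        linarith [zx _ h1 h2]
  · -- vertex n-1 bottommost among the others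
    intro v hv
    have hb : ((⟨n - 1, by omega⟩ : Fin n) : ℕ) = n - 1 := rfl
    rw [rhob _ hb, rbylo]
    have hv0 : (v : ℕ) ≠ 0 := fun hh => hv (Fin.ext hh)
    rcases eq_or_ne (v : ℕ) (n - 1) with hvb | hvb
    · rw [rhob v hvb, rbylo]
    · obtain ⟨h1, h2⟩ := hvin v hv0 hvb
      rw [rhoi v hv0 hvb]
      linarith [zy _ h1 h2]
  · -- top-right corners of 0..i exposed
    intro v hvi u huv
    have hne : (u : ℕ) ≠ (v : ℕ) := fun hh => huv (Fin.ext hh)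
    have hvj : (v : ℕ) ≤ j := hvi
    rcases eq_or_ne (v : ℕ) 0 with hv0 | hv0
    · -- v = 0 : corner (0, Ha + 1)
      rw [rho0 v hv0]
      rcases eq_or_ne (u : ℕ) (n - 1) with hub | hub
      · rw [rhob u hub]
        rintro ⟨m1, m2, m3, m4⟩
        rw [r0yhi] at m4
        linarith [m4]
      · have hu0 : (u : ℕ) ≠ 0 := by omega
        obtain ⟨h1, h2⟩ := hvin u hu0 hub
        rw [rhoi u hu0 hub]
        rintro ⟨m1, m2, m3, m4⟩
        rw [r0xhi] at m1 m2
        rw [r0yhi] at m3 m4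
        have hxl : (ρM (u : ℕ)).xlo = 0 := le_antisymm m1 (zx _ h1 h2)
        have hEu := (sM.la _ h1 h2).1 hxl
        have := (sM.laSpan _ h1 h2 hEu).1
        linarith
    · rcases eq_or_ne (v : ℕ) (n - 1) with hvb | hvb
      · -- v = n-1 : corner (1, 0); here j = n - 1
        have hjb : j = n - 1 := by
          have := i.isLt
          omega
        rw [rhob v hvb]
        rcases eq_or_ne (u : ℕ) 0 with hu0 | hu0
        · rw [rho0 u hu0]
          rintro ⟨m1, m2, m3, m4⟩
          rw [rbxhi] at m1 m2
          rw [r0xhi] at m2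
          linarith
        · have hub : (u : ℕ) ≠ n - 1 := by omega
          obtain ⟨h1, h2⟩ := hvin u hu0 hub
          rw [rhoi u hu0 hub]
          rintro ⟨m1, m2, m3, m4⟩
          rw [rbxhi] at m1 m2
          have := sM.tmode (by omega) _ h1 h2
          linarith
      · -- v inner
        obtain ⟨hv1, hv2⟩ := hvin v hv0 hvb
        rw [rhoi v hv0 hvb]
        have hvquad : 0 ≤ (ρM (v : ℕ)).ylo := by
          rcases sM.zone _ hv1 hv2 with hq | hs
          · exact hq.2
          · omega
        rcases eq_or_ne (u : ℕ) 0 with hu0 | hu0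
        · rw [rho0 u hu0]
          rintro ⟨m1, m2, m3, m4⟩
          rw [r0xhi] at m2
          linarith [zxhi _ hv1 hv2]
        · rcases eq_or_ne (u : ℕ) (n - 1) with hub | hub
          · rw [rhob u hub]
            rintro ⟨m1, m2, m3, m4⟩
            rw [rbyhi] at m4
            linarith [(ρM (v : ℕ)).hy]
          · obtain ⟨h1, h2⟩ := hvin u hu0 hub
            rw [rhoi u hu0 hub]
            exact sM.trexp _ _ hv1 hv2 h1 h2 (by omega) hvj
  · -- bottom-right corners of i..n-1 exposed
    intro v hvi u huv
    have hne : (u : ℕ) ≠ (v : ℕ) := fun hh => huv (Fin.ext hh)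
    have hvj : j ≤ (v : ℕ) := hvi
    rcases eq_or_ne (v : ℕ) (n - 1) with hvb | hvb
    · -- v = n-1 : corner (1, -d0)
      rw [rhob v hvb]
      rcases eq_or_ne (u : ℕ) 0 with hu0 | hu0
      · rw [rho0 u hu0]
        rintro ⟨m1, m2, m3, m4⟩
        rw [rbxhi] at m1 m2
        rw [r0xhi] at m2
        linarith
      · have hub : (u : ℕ) ≠ n - 1 := by omega
        obtain ⟨h1, h2⟩ := hvin u hu0 hub
        rw [rhoi u hu0 hub]
        rintro ⟨m1, m2, m3, m4⟩
        rw [rbylo] at m3 m4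
        linarith [zy _ h1 h2]
    · rcases eq_or_ne (v : ℕ) 0 with hv0 | hv0
      · -- v = 0 : corner (0, -d0 - 1)
        rw [rho0 v hv0]
        rcases eq_or_ne (u : ℕ) (n - 1) with hub | hub
        · rw [rhob u hub]
          rintro ⟨m1, m2, m3, m4⟩
          rw [r0ylo] at m3 m4
          rw [rbylo] at m3
          linarith
        · have hu0 : (u : ℕ) ≠ 0 := by omega
          obtain ⟨h1, h2⟩ := hvin u hu0 hub
          rw [rhoi u hu0 hub]
          rintro ⟨m1, m2, m3, m4⟩
          rw [r0ylo] at m3 m4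
          linarith [zy _ h1 h2]
      · -- v inner
        obtain ⟨hv1, hv2⟩ := hvin v hv0 hvb
        rw [rhoi v hv0 hvb]
        rcases eq_or_ne (u : ℕ) 0 with hu0 | hu0
        · rw [rho0 u hu0]
          rintro ⟨m1, m2, m3, m4⟩
          rw [r0xhi] at m2
          linarith [zxhi _ hv1 hv2]
        · rcases eq_or_ne (u : ℕ) (n - 1) with hub | hub
          · rw [rhob u hub]
            rintro ⟨m1, m2, m3, m4⟩
            rw [rbyhi] at m4
            rw [rbxhi] at m2
            rcases sM.zone _ hv1 hv2 with hq | hs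
            · have hq0 : (ρM (v : ℕ)).ylo = 0 := le_antisymm m4 hq.2
              have := (sM.bbQuad _ hv1 hv2 hq0).2.2 hvj
              linarith
            · linarith [hs.1, (ρM (v : ℕ)).hx]
          · obtain ⟨h1, h2⟩ := hvin u hu0 hub
            rw [rhoi u hu0 hub]
            exact sM.brexp _ _ hv1 hv2 h1 h2 (by omega) hvj
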